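/- Let n ≥ 1, U ⊆ ℝⁿ open, J = diag(−1,1,…,1) the n×n matrix, λ ≠ 0 a fixed real number, and D_λ = (1/2)(λ I − λ⁻¹ J). Let A, F : U → M(n,ℝ) and set ω_j = e_j F − J Fᵗ e_j J. Suppose X : U → GL(n,ℝ) is differentiable, satisfies Xᵗ J X = J at every point (so X⁻¹ = J Xᵗ J), and satisfies the Riccati equation ∂_{x_j} X = X e_j Aᵗ D_λ X + X ω_j − D_λ J A J e_j for all j. Define F̃ = Xᵗ D_λ A + Fᵗ. Then X⁻¹ ∂_{x_j} X = e_j F̃ᵗ − J F̃ e_j J for all 1 ≤ j ≤ n. -/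
import Mathlib


/- STATEMENT 7: in the proof of the Bäcklund transformation theorem (Section 3):
   if X ∈ O(1,n−1) satisfies the Riccati equation, then
   X⁻¹ ∂_{x_j} X = e_j F̃ᵗ − J F̃ e_j J with F̃ = Xᵗ D_λ A + Fᵗ. -/

noncomputable section

open Matrix

variable {n : ℕ}

/-- entrywise partial derivative ∂_{x_j} of a matrix-valued function on ℝⁿ -/
def mpd (j : Fin n) (f : (Fin n → ℝ) → Matrix (Fin n) (Fin n) ℝ) (x : Fin n → ℝ) :
    Matrix (Fin n) (Fin n) ℝ :=
  Matrix.of fun a b => fderiv ℝ (fun y => f y a b) x (Pi.single j 1)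

/-- J = diag(−1,1,…,1) -/
def Jmat (n : ℕ) : Matrix (Fin n) (Fin n) ℝ :=
  Matrix.diagonal fun i => if (i : ℕ) = 0 then (-1 : ℝ) else 1

/-- e_j : the diagonal matrix with 1 in the j-th diagonal entry and 0 elsewhere -/
def eMat (j : Fin n) : Matrix (Fin n) (Fin n) ℝ :=
  Matrix.diagonal (Pi.single j 1)

/-- D_λ = (1/2)(λ I − λ⁻¹ J) -/
def Dlam (n : ℕ) (lam : ℝ) : Matrix (Fin n) (Fin n) ℝ :=
  (1/2 : ℝ) • (lam • (1 : Matrix (Fin n) (Fin n) ℝ) - lam⁻¹ • Jmat n)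


lemma JJ : Jmat n * Jmat n = 1 := by
  simp only [Jmat, diagonal_mul_diagonal]
  have : (fun i : Fin n => (if (i:ℕ)=0 then (-1:ℝ) else 1) * (if (i:ℕ)=0 then (-1:ℝ) else 1)) = fun _ => 1 := by
    funext i; by_cases h : (i:ℕ)=0 <;> simp [h]
  rw [this, diagonal_one]

lemma Jt : (Jmat n)ᵀ = Jmat n := by simp [Jmat]

lemma eJ (j : Fin n) : eMat j * Jmat n = Jmat n * eMat j := by
  simp only [eMat, Jmat, diagonal_mul_diagonal, mul_comm]

lemma JD (lam : ℝ) : Jmat n * Dlam n lam = Dlam n lam * Jmat n := by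
  simp only [Dlam, mul_smul_comm, smul_mul_assoc, mul_sub, sub_mul, mul_one, one_mul]

lemma JDJ (lam : ℝ) : Jmat n * Dlam n lam * Jmat n = Dlam n lam := by
  rw [JD, mul_assoc, JJ, mul_one]

lemma Dt (lam : ℝ) : (Dlam n lam)ᵀ = Dlam n lam := by
  simp [Dlam, transpose_smul, transpose_sub, Jt]

theorem backlund_new_F (hn : 1 ≤ n) (U : Set (Fin n → ℝ)) (hU : IsOpen U)
    (lam : ℝ) (hlam : lam ≠ 0)
    (A F : (Fin n → ℝ) → Matrix (Fin n) (Fin n) ℝ)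
    (ω : Fin n → (Fin n → ℝ) → Matrix (Fin n) (Fin n) ℝ)
    (hω : ∀ j x, ω j x = eMat j * F x - Jmat n * (F x)ᵀ * eMat j * Jmat n)
    (X : (Fin n → ℝ) → Matrix (Fin n) (Fin n) ℝ)
    (hXdiff : ∀ x ∈ U, ∀ a b : Fin n, DifferentiableAt ℝ (fun y => X y a b) x)
    (hXinv : ∀ x ∈ U, IsUnit (X x))
    (hXO : ∀ x ∈ U, (X x)ᵀ * Jmat n * X x = Jmat n)
    (hRiccati : ∀ x ∈ U, ∀ j : Fin n,
      mpd j X x = X x * eMat j * (A x)ᵀ * Dlam n lam * X x + X x * ω j x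
        - Dlam n lam * Jmat n * A x * Jmat n * eMat j)
    (Ftil : (Fin n → ℝ) → Matrix (Fin n) (Fin n) ℝ)
    (hFtil : ∀ x, Ftil x = (X x)ᵀ * Dlam n lam * A x + (F x)ᵀ) :
    ∀ x ∈ U, ∀ j : Fin n,
      (X x)⁻¹ * mpd j X x = eMat j * (Ftil x)ᵀ - Jmat n * Ftil x * eMat j * Jmat n := by
  intro x hx j
  have hdet : IsUnit (X x).det := (Matrix.isUnit_iff_isUnit_det _).mp (hXinv x hx)
  have hinvmul : (X x)⁻¹ * X x = 1 := Matrix.nonsing_inv_mul _ hdet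
  have hinv : (X x)⁻¹ = Jmat n * (X x)ᵀ * Jmat n := by
    apply Matrix.inv_eq_left_inv
    calc Jmat n * (X x)ᵀ * Jmat n * X x
        = Jmat n * ((X x)ᵀ * Jmat n * X x) := by simp [mul_assoc]
      _ = Jmat n * Jmat n := by rw [hXO x hx]
      _ = 1 := JJ
  have key : (X x)⁻¹ * (Dlam n lam * Jmat n * A x * Jmat n * eMat j)
      = Jmat n * ((X x)ᵀ * (Dlam n lam * (A x * (eMat j * Jmat n)))) := by
    rw [hinv]
    simp only [mul_assoc]
    rw [show Jmat n * (Dlam n lam * (Jmat n * (A x * (Jmat n * eMat j))))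
        = Dlam n lam * (A x * (Jmat n * eMat j)) by
      rw [← mul_assoc, ← mul_assoc, JDJ], ← eJ]
  have hmul : (X x)⁻¹ * (X x * eMat j * (A x)ᵀ * Dlam n lam * X x + X x * ω j x)
      = eMat j * (A x)ᵀ * Dlam n lam * X x + ω j x := by
    rw [mul_add]
    simp only [mul_assoc, ← mul_assoc ((X x)⁻¹), hinvmul, one_mul]
  rw [hRiccati x hx j, hFtil, mul_sub, hmul, key, hω]
  simp only [transpose_add, transpose_mul, transpose_transpose, Dt]
  noncomm_ring

end
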